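/- Let $(X_k)_{k\ge 0}$ be i.i.d. real random variables and $0<p<1$ with $\mathbb{E}|X_0|^p < \infty$. Then $\lim_{n\to\infty} n^{-1/p} \sum_{k=0}^{n-1} X_k = 0$ almost surely. -/

import Mathlib

open MeasureTheory Filter Topology ProbabilityTheory Finset Real

lemma mz_bern {q t : ℝ} (hq : 1 < q) (ht : 1 ≤ t) :
    1 + (q - 1) / (t + 1) ≤ ((t + 1) / t) ^ (q - 1) := by
  have ht0 : (0:ℝ) < t := by linarith
  have ht1 : (0:ℝ) < t + 1 := by linarith
  rcases le_or_gt 2 q with h2 | h2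
  · have hs : (-1:ℝ) ≤ 1 / t := le_trans (by norm_num) (le_of_lt (by positivity : (0:ℝ) < 1/t))
    have hb := one_add_mul_self_le_rpow_one_add hs (p := q - 1) (by linarith)
    have heq : (1:ℝ) + 1 / t = (t + 1) / t := by field_simp
    rw [heq] at hb
    have h3 : (q - 1) / (t + 1) ≤ (q - 1) / t := by
      gcongr
      · linarith
    calc 1 + (q - 1) / (t + 1) ≤ 1 + (q - 1) / t := by linarith
      _ = 1 + (q - 1) * (1 / t) := by ring
      _ ≤ _ := hb
  · have hs : (-1:ℝ) ≤ -(1 / (t + 1)) := by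
      rw [neg_le_neg_iff]
      rw [div_le_one ht1]; linarith
    have hb := rpow_one_add_le_one_add_mul_self hs (p := q - 1) (by linarith) (by linarith)
    have heq : (1:ℝ) + -(1 / (t + 1)) = t / (t + 1) := by field_simp; ring
    rw [heq] at hb
    have hx : (0:ℝ) < t / (t + 1) := by positivity
    have hpow : 0 < (t / (t + 1)) ^ (q - 1) := rpow_pos_of_pos hx _
    have hinv : ((t + 1) / t) ^ (q - 1) = ((t / (t + 1)) ^ (q - 1))⁻¹ := by
      rw [← Real.inv_rpow hx.le, inv_div]
    rw [hinv, inv_eq_one_div, le_div_iff₀ hpow]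
    have hu0 : 0 ≤ (q - 1) / (t + 1) := div_nonneg (by linarith) (by linarith)
    have hb' : (t / (t + 1)) ^ (q - 1) ≤ 1 - (q - 1) / (t + 1) := by
      calc (t / (t + 1)) ^ (q - 1) ≤ 1 + (q - 1) * -(1 / (t + 1)) := hb
        _ = 1 - (q - 1) / (t + 1) := by ring
    nlinarith [mul_le_mul_of_nonneg_left hb' (by linarith : (0:ℝ) ≤ 1 + (q - 1) / (t + 1)),
      sq_nonneg ((q - 1) / (t + 1))]

lemma mz_key {q t : ℝ} (hq : 1 < q) (ht : 1 ≤ t) :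
    (t + 1) ^ (-q) ≤ (q - 1)⁻¹ * (t ^ (1 - q) - (t + 1) ^ (1 - q)) := by
  have ht0 : (0:ℝ) < t := by linarith
  have ht1 : (0:ℝ) < t + 1 := by linarith
  have hq0 : (0:ℝ) < q - 1 := by linarith
  rw [inv_mul_eq_div, le_div_iff₀ hq0]
  have hA : (t + 1:ℝ) ^ (-q) = (t + 1) ^ (1 - q) / (t + 1) := by
    rw [show -q = (1 - q) - 1 by ring, Real.rpow_sub ht1, Real.rpow_one]
  have hR : ((t + 1) / t) ^ (q - 1) * (t + 1) ^ (1 - q) = t ^ (1 - q) := by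
    rw [Real.div_rpow ht1.le ht0.le, div_mul_eq_mul_div, ← Real.rpow_add ht1,
      show q - 1 + (1 - q) = 0 by ring, Real.rpow_zero, one_div,
      ← Real.rpow_neg ht0.le, show -(q - 1) = 1 - q by ring]
  have hApos : (0:ℝ) < (t + 1) ^ (1 - q) := rpow_pos_of_pos ht1 _
  have hmul := mul_le_mul_of_nonneg_right (mz_bern hq ht) hApos.le
  have hL : (1 + (q - 1) / (t + 1)) * (t + 1) ^ (1 - q)
      = (t + 1) ^ (1 - q) + (q - 1) * ((t + 1) ^ (1 - q) / (t + 1)) := by ring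
  rw [hL, hR] at hmul
  rw [hA]
  linarith



lemma mz_tail_nat {q : ℝ} (hq : 1 < q) {m : ℕ} (hm : 1 ≤ m) (N : ℕ) :
    ∑ k ∈ range N, (if (k:ℝ) + 1 < (m:ℝ) then 0 else ((k:ℝ) + 1) ^ (-q))
      ≤ (m:ℝ) ^ (-q) + (q - 1)⁻¹ * (m:ℝ) ^ (1 - q) := by
  have hq0 : (0:ℝ) < q - 1 := by linarith
  have hm0 : (1:ℝ) ≤ (m:ℝ) := by exact_mod_cast hm
  have main : ∀ N : ℕ, ∑ k ∈ range N, (if (k:ℝ) + 1 < (m:ℝ) then 0 else ((k:ℝ) + 1) ^ (-q))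
      ≤ (if m ≤ N then (m:ℝ) ^ (-q) + (q - 1)⁻¹ * ((m:ℝ) ^ (1 - q) - (N:ℝ) ^ (1 - q)) else 0) := by
    intro N
    induction N with
    | zero =>
      rw [if_neg (by omega)]
      simp
    | succ N ih =>
      rw [Finset.sum_range_succ]
      rcases lt_trichotomy (N + 1) m with h | h | h
      · have h1 : ¬ m ≤ N := by omega
        have h2 : ¬ m ≤ N + 1 := by omega
        have hfN : ((N:ℝ) + 1 < (m:ℝ)) := by exact_mod_cast h
        rw [if_neg h1] at ih
        rw [if_neg h2, if_pos hfN]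
        linarith
      · have h1 : ¬ m ≤ N := by omega
        have h2 : m ≤ N + 1 := by omega
        have hfN : ¬ ((N:ℝ) + 1 < (m:ℝ)) := by
          push_neg; exact_mod_cast h.ge
        rw [if_neg h1] at ih
        rw [if_pos h2, if_neg hfN]
        have hNm : ((N:ℝ) + 1) = (m:ℝ) := by exact_mod_cast h
        rw [hNm]
        have : ((N + 1 : ℕ):ℝ) = (m:ℝ) := by exact_mod_cast h
        rw [this]
        linarith
      · have h1 : m ≤ N := by omega
        have h2 : m ≤ N + 1 := by omega
        have hN1 : (1:ℝ) ≤ (N:ℝ) := by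
          have : 1 ≤ N := le_trans hm h1
          exact_mod_cast this
        have hfN : ¬ ((N:ℝ) + 1 < (m:ℝ)) := by
          push_neg
          have : (m:ℝ) ≤ (N:ℝ) := by exact_mod_cast h1
          linarith
        rw [if_pos h1] at ih
        rw [if_pos h2, if_neg hfN]
        have hkey := mz_key hq hN1
        have hcast : ((N + 1 : ℕ):ℝ) = (N:ℝ) + 1 := by push_cast; ring
        rw [hcast]
        linarith
  calc ∑ k ∈ range N, (if (k:ℝ) + 1 < (m:ℝ) then 0 else ((k:ℝ) + 1) ^ (-q)) ≤ _ := main N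
    _ ≤ (m:ℝ) ^ (-q) + (q - 1)⁻¹ * (m:ℝ) ^ (1 - q) := by
      split_ifs with h
      · have hN0 : (0:ℝ) ≤ (N:ℝ) ^ (1 - q) := by positivity
        have : (0:ℝ) ≤ (q - 1)⁻¹ := inv_nonneg.2 (by linarith)
        nlinarith
      · positivity

lemma mz_tail_real {q : ℝ} (hq : 1 < q) {r : ℝ} (hr : 1 ≤ r) (N : ℕ) :
    ∑ k ∈ range N, (if (k:ℝ) + 1 < r then 0 else ((k:ℝ) + 1) ^ (-q))
      ≤ (1 + (q - 1)⁻¹) * r ^ (1 - q) := by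
  set m := ⌈r⌉₊ with hm_def
  have hr0 : (0:ℝ) < r := by linarith
  have hm1 : 1 ≤ m := Nat.one_le_ceil_iff.2 hr0
  have hrm : r ≤ (m:ℝ) := Nat.le_ceil r
  have step1 : ∑ k ∈ range N, (if (k:ℝ) + 1 < r then 0 else ((k:ℝ) + 1) ^ (-q))
      ≤ ∑ k ∈ range N, (if (k:ℝ) + 1 < (m:ℝ) then 0 else ((k:ℝ) + 1) ^ (-q)) := by
    apply Finset.sum_le_sum
    intro k _
    split_ifs with h1 h2 h3
    · exact le_refl _
    · positivity
    · exfalso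
      apply h1
      have hk : k + 1 < m := by exact_mod_cast h3
      have := (Nat.lt_ceil).1 hk
      push_cast at this
      linarith
    · exact le_refl _
  have step2 := mz_tail_nat hq hm1 N
  have hmq : (m:ℝ) ^ (-q) ≤ (m:ℝ) ^ (1 - q) := by
    apply Real.rpow_le_rpow_of_exponent_le (by exact_mod_cast hm1) (by linarith)
  have hmr : (m:ℝ) ^ (1 - q) ≤ r ^ (1 - q) :=
    Real.rpow_le_rpow_of_nonpos hr0 hrm (by linarith)
  have hKpos : (0:ℝ) ≤ 1 + (q - 1)⁻¹ := by
    have : (0:ℝ) ≤ (q - 1)⁻¹ := inv_nonneg.2 (by linarith)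
    linarith
  calc ∑ k ∈ range N, (if (k:ℝ) + 1 < r then 0 else ((k:ℝ) + 1) ^ (-q))
      ≤ (m:ℝ) ^ (-q) + (q - 1)⁻¹ * (m:ℝ) ^ (1 - q) := le_trans step1 step2
    _ ≤ (1 + (q - 1)⁻¹) * (m:ℝ) ^ (1 - q) := by
        have : (0:ℝ) ≤ (q - 1)⁻¹ := inv_nonneg.2 (by linarith)
        nlinarith
    _ ≤ (1 + (q - 1)⁻¹) * r ^ (1 - q) := by
        apply mul_le_mul_of_nonneg_left hmr hKpos



lemma mz_pointwise {p q : ℝ} (hp : 0 < p) (hp1 : p ≤ 1) (hq : 1 < q) (hpq : p * q = 1)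
    {x : ℝ} (hx : 0 ≤ x) (N : ℕ) :
    ∑ k ∈ range N, (if x ≤ ((k:ℝ) + 1) ^ q then x / ((k:ℝ) + 1) ^ q else 0)
      ≤ (1 + (q - 1)⁻¹) * x ^ p := by
  have hKpos : (0:ℝ) ≤ 1 + (q - 1)⁻¹ := by
    have : (0:ℝ) ≤ (q - 1)⁻¹ := inv_nonneg.2 (by linarith)
    linarith
  rcases eq_or_lt_of_le hx with hx0 | hx0
  · simp only [← hx0]
    have : ∀ k ∈ range N, ((if (0:ℝ) ≤ ((k:ℝ) + 1) ^ q then (0:ℝ) / ((k:ℝ) + 1) ^ q else 0)) = 0 := by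
      intro k _
      split_ifs <;> simp
    rw [Finset.sum_congr rfl this]
    simp
    positivity
  · set r := max (x ^ p) 1 with hr_def
    have hr1 : (1:ℝ) ≤ r := le_max_right _ _
    have hxp_le_r : x ^ p ≤ r := le_max_left _ _
    have step1 : ∀ k : ℕ, (if x ≤ ((k:ℝ) + 1) ^ q then x / ((k:ℝ) + 1) ^ q else 0)
        ≤ x * (if (k:ℝ) + 1 < r then 0 else ((k:ℝ) + 1) ^ (-q)) := by
      intro k
      have hk1 : (0:ℝ) < (k:ℝ) + 1 := by positivity
      have hk1' : (1:ℝ) ≤ (k:ℝ) + 1 := by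
        have : (0:ℝ) ≤ (k:ℝ) := Nat.cast_nonneg k
        linarith
      split_ifs with h1 h2
      · exfalso
        have hxp : x ^ p ≤ ((k:ℝ) + 1) := by
          have := Real.rpow_le_rpow hx h1 hp.le
          rwa [← Real.rpow_mul hk1.le, show q * p = 1 by linarith [mul_comm p q],
            Real.rpow_one] at this
        have : r ≤ (k:ℝ) + 1 := by
          rw [hr_def, max_le_iff]; exact ⟨hxp, hk1'⟩
        linarith
      · rw [Real.rpow_neg hk1.le, div_eq_mul_inv]
      · positivity
      · positivity
    calc ∑ k ∈ range N, (if x ≤ ((k:ℝ) + 1) ^ q then x / ((k:ℝ) + 1) ^ q else 0)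
        ≤ ∑ k ∈ range N, x * (if (k:ℝ) + 1 < r then 0 else ((k:ℝ) + 1) ^ (-q)) :=
          Finset.sum_le_sum fun k _ => step1 k
      _ = x * ∑ k ∈ range N, (if (k:ℝ) + 1 < r then 0 else ((k:ℝ) + 1) ^ (-q)) := by
          rw [Finset.mul_sum]
      _ ≤ x * ((1 + (q - 1)⁻¹) * r ^ (1 - q)) :=
          mul_le_mul_of_nonneg_left (mz_tail_real hq hr1 N) hx
      _ ≤ (1 + (q - 1)⁻¹) * x ^ p := by
          rcases le_or_gt 1 x with hx1 | hx1
          · have hxp1 : (1:ℝ) ≤ x ^ p := Real.one_le_rpow hx1 hp.le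
            have hr_eq : r = x ^ p := max_eq_left hxp1
            rw [hr_eq]
            have heq : x * ((1 + (q - 1)⁻¹) * (x ^ p) ^ (1 - q)) = (1 + (q - 1)⁻¹) * x ^ p := by
              rw [← Real.rpow_mul hx]
              rw [show x * ((1 + (q - 1)⁻¹) * x ^ (p * (1 - q))) =
                (1 + (q - 1)⁻¹) * (x * x ^ (p * (1 - q))) by ring]
              congr 1
              have hexp : p = 1 + p * (1 - q) := by linear_combination hpq
              conv_rhs => rw [hexp]
              rw [Real.rpow_add hx0, Real.rpow_one]
            linarith [heq.le]
          · have hxp1 : x ^ p ≤ 1 := Real.rpow_le_one hx hx1.le hp.le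
            have hr_eq : r = 1 := max_eq_right hxp1
            rw [hr_eq, Real.one_rpow, mul_one]
            have hxle : x ≤ x ^ p := by
              nth_rewrite 1 [← Real.rpow_one x]
              exact Real.rpow_le_rpow_of_exponent_ge hx0 hx1.le hp1
            nlinarith

lemma mz_const_div {q : ℝ} (hq : 0 < q) (A : ℝ) :
    Tendsto (fun n : ℕ => A / (n:ℝ) ^ q) atTop (𝓝 0) := by
  have h1 : Tendsto (fun n : ℕ => ((n:ℝ)) ^ q) atTop atTop :=
    (tendsto_rpow_atTop hq).comp tendsto_natCast_atTop_atTop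
  simpa [div_eq_mul_inv] using (tendsto_const_nhds (x := A)).mul h1.inv_tendsto_atTop

lemma mz_kron {q : ℝ} (hq : 0 < q) {c : ℕ → ℝ} (hc : ∀ k, 0 ≤ c k) (hsum : Summable c) :
    Tendsto (fun n : ℕ => (∑ k ∈ range n, c k * ((k:ℝ) + 1) ^ q) / (n:ℝ) ^ q)
      atTop (𝓝 0) := by
  rw [Metric.tendsto_atTop]
  intro ε hε
  set S := ∑' k, c k with hS
  have hpartial : Tendsto (fun N => ∑ k ∈ range N, c k) atTop (𝓝 S) := hsum.hasSum.tendsto_sum_nat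
  obtain ⟨N, hN⟩ : ∃ N, S - ε / 3 < ∑ k ∈ range N, c k := by
    rcases (hpartial.eventually (eventually_gt_nhds (by linarith : S - ε / 3 < S))).exists
      with ⟨N, hN⟩
    exact ⟨N, hN⟩
  set A := ∑ k ∈ range N, c k * ((k:ℝ) + 1) ^ q with hA
  obtain ⟨M, hM⟩ : ∃ M : ℕ, ∀ n ≥ M, A / (n:ℝ) ^ q < ε / 3 := by
    have := (mz_const_div hq A).eventually (eventually_lt_nhds (by linarith : (0:ℝ) < ε / 3))
    rcases eventually_atTop.1 this with ⟨M, hM⟩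
    exact ⟨M, hM⟩
  refine ⟨max (max N M) 1, fun n hn => ?_⟩
  have hnN : N ≤ n := le_trans (le_trans (le_max_left _ _) (le_max_left _ _)) hn
  have hnM : M ≤ n := le_trans (le_trans (le_max_right _ _) (le_max_left _ _)) hn
  have hn1 : 1 ≤ n := le_trans (le_max_right _ _) hn
  have hn0 : (0:ℝ) < (n:ℝ) ^ q := by
    apply Real.rpow_pos_of_pos
    exact_mod_cast hn1
  have hsplit : ∑ k ∈ range n, c k * ((k:ℝ) + 1) ^ q
      = A + ∑ k ∈ Ico N n, c k * ((k:ℝ) + 1) ^ q := by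
    rw [hA, Finset.sum_range_add_sum_Ico _ hnN]
  have hIco : ∑ k ∈ Ico N n, c k * ((k:ℝ) + 1) ^ q ≤ (ε / 3) * (n:ℝ) ^ q := by
    have h1 : ∑ k ∈ Ico N n, c k * ((k:ℝ) + 1) ^ q ≤ ∑ k ∈ Ico N n, c k * (n:ℝ) ^ q := by
      apply Finset.sum_le_sum
      intro k hk
      have hk2 := (Finset.mem_Ico.1 hk).2
      apply mul_le_mul_of_nonneg_left _ (hc k)
      apply Real.rpow_le_rpow (by positivity) _ hq.le
      have : (k:ℝ) + 1 ≤ (n:ℝ) := by exact_mod_cast hk2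
      exact this
    have h2 : ∑ k ∈ Ico N n, c k ≤ ε / 3 := by
      have hle : ∑ k ∈ range n, c k ≤ S := Summable.sum_le_tsum _ (fun i _ => hc i) hsum
      have : ∑ k ∈ range N, c k + ∑ k ∈ Ico N n, c k = ∑ k ∈ range n, c k :=
        Finset.sum_range_add_sum_Ico _ hnN
      linarith
    calc ∑ k ∈ Ico N n, c k * ((k:ℝ) + 1) ^ q ≤ ∑ k ∈ Ico N n, c k * (n:ℝ) ^ q := h1
      _ = (∑ k ∈ Ico N n, c k) * (n:ℝ) ^ q := by rw [Finset.sum_mul]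
      _ ≤ (ε / 3) * (n:ℝ) ^ q := mul_le_mul_of_nonneg_right h2 hn0.le
  have hnonneg : 0 ≤ (∑ k ∈ range n, c k * ((k:ℝ) + 1) ^ q) / (n:ℝ) ^ q := by
    apply div_nonneg _ hn0.le
    apply Finset.sum_nonneg
    intro k _
    have : (0:ℝ) ≤ ((k:ℝ) + 1) ^ q := by positivity
    exact mul_nonneg (hc k) this
  rw [Real.dist_eq, sub_zero, abs_of_nonneg hnonneg]
  calc (∑ k ∈ range n, c k * ((k:ℝ) + 1) ^ q) / (n:ℝ) ^ q
      = A / (n:ℝ) ^ q + (∑ k ∈ Ico N n, c k * ((k:ℝ) + 1) ^ q) / (n:ℝ) ^ q := by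
        rw [hsplit, add_div]
    _ ≤ A / (n:ℝ) ^ q + (ε / 3 * (n:ℝ) ^ q) / (n:ℝ) ^ q := by
        gcongr
    _ = A / (n:ℝ) ^ q + ε / 3 := by
        rw [mul_div_assoc, div_self hn0.ne', mul_one]
    _ < ε / 3 + ε / 3 := by
        have := hM n hnM
        linarith
    _ < ε := by linarith







theorem marcinkiewicz_zygmund_iid
    {Ω : Type*} [MeasurableSpace Ω]
    (μ : Measure Ω) [IsProbabilityMeasure μ]
    (X : ℕ → Ω → ℝ) (hmeas : ∀ i, Measurable (X i))
    (hindep : iIndepFun X μ)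
    (hident : ∀ i, IdentDistrib (X i) (X 0) μ μ)
    (p : ℝ) (hp : 0 < p) (hp1 : p < 1)
    (hint : Integrable (fun ω => |X 0 ω| ^ p) μ) :
    ∀ᵐ ω ∂μ, Tendsto
      (fun n : ℕ => (∑ k ∈ Finset.range n, X k ω) / (n : ℝ) ^ (1 / p))
      atTop (𝓝 0) := by
  have hq1 : 1 < 1 / p := by rw [lt_div_iff₀ hp]; linarith
  have hq0 : 0 < 1 / p := by positivity
  have hpq : p * (1 / p) = 1 := by field_simp
  set φ : ℕ → ℝ → ℝ := fun k x =>
    if |x| ≤ ((k:ℝ) + 1) ^ (1 / p) then |x| / ((k:ℝ) + 1) ^ (1 / p) else 0 with hφ_def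
  have hφ0 : ∀ k x, 0 ≤ φ k x := by
    intro k x
    rw [hφ_def]
    dsimp only
    split_ifs with h
    · apply div_nonneg (abs_nonneg _)
      positivity
    · exact le_refl 0
  have hφm : ∀ k, Measurable (φ k) := by
    intro k
    apply Measurable.ite (measurableSet_le measurable_abs measurable_const)
      (measurable_abs.div_const _) measurable_const
  -- pointwise ENNReal tsum bound
  have hENN : ∀ y : ℝ, ∑' k, ENNReal.ofReal (φ k y)
      ≤ ENNReal.ofReal ((1 + (1 / p - 1)⁻¹) * |y| ^ p) := by
    intro y
    rw [ENNReal.tsum_eq_iSup_sum]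
    apply iSup_le
    intro s
    obtain ⟨N, hN⟩ := Finset.exists_nat_subset_range s
    calc ∑ k ∈ s, ENNReal.ofReal (φ k y)
        ≤ ∑ k ∈ range N, ENNReal.ofReal (φ k y) := Finset.sum_le_sum_of_subset hN
      _ = ENNReal.ofReal (∑ k ∈ range N, φ k y) :=
          (ENNReal.ofReal_sum_of_nonneg (fun i _ => hφ0 i y)).symm
      _ ≤ ENNReal.ofReal ((1 + (1 / p - 1)⁻¹) * |y| ^ p) := by
          apply ENNReal.ofReal_le_ofReal
          exact mz_pointwise hp hp1.le hq1 hpq (abs_nonneg y) N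
  -- identically distributed lintegrals
  have hid_lint : ∀ k, ∫⁻ ω, ENNReal.ofReal (φ k (X k ω)) ∂μ
      = ∫⁻ ω, ENNReal.ofReal (φ k (X 0 ω)) ∂μ := by
    intro k
    have hm : Measurable fun x => ENNReal.ofReal (φ k x) :=
      ENNReal.measurable_ofReal.comp (hφm k)
    rw [← lintegral_map hm (hmeas k), ← lintegral_map hm (hmeas 0), (hident k).map_eq]
  have hfin : ∫⁻ ω, ENNReal.ofReal ((1 + (1 / p - 1)⁻¹) * |X 0 ω| ^ p) ∂μ < ⊤ := by
    have hK : (0:ℝ) ≤ 1 + (1 / p - 1)⁻¹ := by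
      have : (0:ℝ) ≤ (1 / p - 1)⁻¹ := inv_nonneg.2 (by linarith)
      linarith
    have h1 : ∀ ω : Ω, ENNReal.ofReal ((1 + (1 / p - 1)⁻¹) * |X 0 ω| ^ p)
        = ENNReal.ofReal (1 + (1 / p - 1)⁻¹) * ENNReal.ofReal (|X 0 ω| ^ p) := fun ω =>
      ENNReal.ofReal_mul hK
    simp only [h1]
    rw [lintegral_const_mul' _ _ ENNReal.ofReal_ne_top]
    have h2 : ∫⁻ ω, ENNReal.ofReal (|X 0 ω| ^ p) ∂μ < ⊤ :=
      (hasFiniteIntegral_iff_ofReal (ae_of_all μ fun ω => by positivity)).1 hint.2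
    exact ENNReal.mul_lt_top ENNReal.ofReal_lt_top h2
  have hG : ∫⁻ ω, ∑' k, ENNReal.ofReal (φ k (X k ω)) ∂μ < ⊤ := by
    rw [lintegral_tsum (f := fun k ω => ENNReal.ofReal (φ k (X k ω))) (fun k =>
      ((ENNReal.measurable_ofReal.comp (hφm k)).comp (hmeas k)).aemeasurable)]
    calc ∑' k, ∫⁻ ω, ENNReal.ofReal (φ k (X k ω)) ∂μ
        = ∑' k, ∫⁻ ω, ENNReal.ofReal (φ k (X 0 ω)) ∂μ := tsum_congr hid_lint
      _ = ∫⁻ ω, ∑' k, ENNReal.ofReal (φ k (X 0 ω)) ∂μ :=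
          (lintegral_tsum (f := fun k ω => ENNReal.ofReal (φ k (X 0 ω))) (fun k =>
            ((ENNReal.measurable_ofReal.comp (hφm k)).comp (hmeas 0)).aemeasurable)).symm
      _ ≤ ∫⁻ ω, ENNReal.ofReal ((1 + (1 / p - 1)⁻¹) * |X 0 ω| ^ p) ∂μ :=
          lintegral_mono fun ω => hENN (X 0 ω)
      _ < ⊤ := hfin
  have hsummable : ∀ᵐ ω ∂μ, Summable fun k => φ k (X k ω) := by
    have hmG : Measurable fun ω => ∑' k, ENNReal.ofReal (φ k (X k ω)) :=
      Measurable.ennreal_tsum fun k =>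
        (ENNReal.measurable_ofReal.comp (hφm k)).comp (hmeas k)
    filter_upwards [ae_lt_top hmG hG.ne] with ω hω
    have := ENNReal.summable_toReal hω.ne
    exact this.congr fun k => ENNReal.toReal_ofReal (hφ0 k (X k ω))
  -- Borel-Cantelli
  have hBC : ∀ᵐ ω ∂μ, ∀ᶠ (k:ℕ) in atTop, |X k ω| ≤ ((k:ℝ) + 1) ^ (1 / p) := by
    set s : ℕ → Set Ω := fun k => {ω | ((k:ℝ) + 1) ^ (1 / p) < |X k ω|} with hs_def
    have hsub : ∀ k, μ (s k) ≤ μ {ω | |X 0 ω| ^ p ∈ Set.Ioi ((k:ℕ):ℝ)} := by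
      intro k
      have hAmeas : MeasurableSet {x : ℝ | ((k:ℝ) + 1) ^ (1 / p) < |x|} :=
        measurableSet_lt measurable_const measurable_abs
      have heq : μ (s k) = μ (X 0 ⁻¹' {x : ℝ | ((k:ℝ) + 1) ^ (1 / p) < |x|}) := by
        have := (hident k).measure_mem_eq hAmeas
        convert this using 2
        rfl
      rw [heq]
      apply measure_mono
      intro ω hω
      simp only [Set.mem_preimage, Set.mem_setOf_eq] at hω
      simp only [Set.mem_setOf_eq, Set.mem_Ioi]
      have h1 : ((k:ℝ) + 1) ≤ |X 0 ω| ^ p := by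
        have h2 := Real.rpow_le_rpow (by positivity) hω.le hp.le
        rwa [← Real.rpow_mul (by positivity), one_div_mul_cancel hp.ne', Real.rpow_one] at h2
      linarith
    have hsum_top : ∑' k, μ (s k) ≠ ⊤ := by
      apply ne_top_of_le_ne_top _ (ENNReal.tsum_le_tsum hsub)
      letI : MeasureSpace Ω := { volume := μ }
      haveI : IsProbabilityMeasure (ℙ : Measure Ω) := ‹IsProbabilityMeasure μ›
      exact (tsum_prob_mem_Ioi_lt_top hint (fun ω => by positivity)).ne
    filter_upwards [ae_eventually_notMem hsum_top] with ω hω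
    filter_upwards [hω] with k hk
    change ¬ (((k:ℝ) + 1) ^ (1 / p) < |X k ω|) at hk
    exact not_lt.1 hk
  -- Assemble
  filter_upwards [hBC, hsummable] with ω hb hsumω
  obtain ⟨K0, hK0⟩ := eventually_atTop.1 hb
  set Y : ℕ → ℝ := fun k => if |X k ω| ≤ ((k:ℝ) + 1) ^ (1 / p) then X k ω else 0 with hY_def
  have hYeq : ∀ k, |Y k| = φ k (X k ω) * ((k:ℝ) + 1) ^ (1 / p) := by
    intro k
    have hk0 : (0:ℝ) < ((k:ℝ) + 1) ^ (1 / p) := by positivity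
    rw [hY_def, hφ_def]
    dsimp only
    split_ifs with h
    · exact (div_mul_cancel₀ _ hk0.ne').symm
    · simp
  set B := ∑ k ∈ range K0, (X k ω - Y k) with hB_def
  have hXY : ∀ n, K0 ≤ n → ∑ k ∈ range n, X k ω = (∑ k ∈ range n, Y k) + B := by
    intro n hn
    have h1 : ∑ k ∈ range n, (X k ω - Y k) = B := by
      rw [← Finset.sum_range_add_sum_Ico _ hn] at *
      have h2 : ∑ k ∈ Ico K0 n, (X k ω - Y k) = 0 := by
        apply Finset.sum_eq_zero
        intro k hk
        have hk0 : K0 ≤ k := (Finset.mem_Ico.1 hk).1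
        have := hK0 k hk0
        rw [hY_def]
        dsimp only
        rw [if_pos this]
        ring
      rw [h2, add_zero]
    calc ∑ k ∈ range n, X k ω = ∑ k ∈ range n, (Y k + (X k ω - Y k)) := by
          apply Finset.sum_congr rfl; intro k _; ring
      _ = (∑ k ∈ range n, Y k) + ∑ k ∈ range n, (X k ω - Y k) := Finset.sum_add_distrib
      _ = (∑ k ∈ range n, Y k) + B := by rw [h1]
  apply squeeze_zero_norm'
    (a := fun n : ℕ => (∑ k ∈ range n, φ k (X k ω) * ((k:ℝ) + 1) ^ (1 / p)) / (n:ℝ) ^ (1 / p)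
      + |B| / (n:ℝ) ^ (1 / p))
  · filter_upwards [eventually_ge_atTop K0, eventually_ge_atTop 1] with n hn hn1
    have hn0 : (0:ℝ) < (n:ℝ) ^ (1 / p) := by
      apply Real.rpow_pos_of_pos
      have : (1:ℕ) ≤ n := hn1
      exact_mod_cast Nat.pos_of_ne_zero (by omega)
    rw [Real.norm_eq_abs, abs_div, abs_of_nonneg hn0.le]
    have hnum : |∑ k ∈ range n, X k ω|
        ≤ (∑ k ∈ range n, φ k (X k ω) * ((k:ℝ) + 1) ^ (1 / p)) + |B| := by
      rw [hXY n hn]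
      calc |(∑ k ∈ range n, Y k) + B| ≤ |∑ k ∈ range n, Y k| + |B| := abs_add_le _ _
        _ ≤ (∑ k ∈ range n, |Y k|) + |B| :=
            add_le_add_left (Finset.abs_sum_le_sum_abs _ _) _
        _ = (∑ k ∈ range n, φ k (X k ω) * ((k:ℝ) + 1) ^ (1 / p)) + |B| := by
            rw [Finset.sum_congr rfl fun k _ => hYeq k]
    calc |∑ k ∈ range n, X k ω| / (n:ℝ) ^ (1 / p)
        ≤ ((∑ k ∈ range n, φ k (X k ω) * ((k:ℝ) + 1) ^ (1 / p)) + |B|) / (n:ℝ) ^ (1 / p) := by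
          exact div_le_div_of_nonneg_right hnum hn0.le
      _ = _ := by rw [add_div]
  · have h1 := mz_kron hq0 (fun k => hφ0 k (X k ω)) hsumω
    have h2 := mz_const_div hq0 |B|
    simpa using h1.add h2
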